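/- Consider the ω-periodic model x_i(m+1) = x_i(m) e^{-a_i(m)h} + θ_i(m)[Σ_{j=1}^N b_{ij}(m) f_j(x_j(m-τ(m))) + I_i(m)], where ω ∈ ℕ and a_i, b_{ij}, I_i, τ : ℕ₀ → ℝ are ω-periodic, a_i(m) > 0, θ_i(m) = (1−e^{-a_i(m)h})/a_i(m), f_j Lipschitz with constant F_j > 0, 0 ≤ τ(m) ≤ τ. If the matrix M = diag(a_1^-,…,a_N^-) − [b_{ij}^+ F_j] is an M-matrix, then the model has a unique ω-periodic solution, and this solution is globally exponentially stable (every solution converges to it at an exponential rate). -/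

import Mathlib

/-- The norm of the segment of `u` at time `m`, with maximum delay `τ`. -/
noncomputable def segNorm {N : ℕ} (τ : ℕ) (u : ℤ → Fin N → ℝ) (m : ℤ) : ℝ :=
  (Finset.Icc (m - τ) m).sup' (Finset.nonempty_Icc.mpr (by omega)) fun k => ‖u k‖

/-- A square real matrix is an M-matrix if its off-diagonal entries are nonpositive
and all of its (complex) eigenvalues have positive real part. -/
def IsMMatrix {N : ℕ} (M : Matrix (Fin N) (Fin N) ℝ) : Prop :=
  (∀ i j, i ≠ j → M i j ≤ 0) ∧
  ∀ z ∈ spectrum ℂ (M.map (Complex.ofReal)), 0 < z.re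


lemma mem_spectrum_of_eigen {N : ℕ} (M : Matrix (Fin N) (Fin N) ℂ) (z : ℂ)
    (v : Fin N → ℂ) (hv : v ≠ 0) (hev : M.mulVec v = z • v) : z ∈ spectrum ℂ M := by
  rw [spectrum.mem_iff]
  intro hU
  rw [Matrix.isUnit_iff_isUnit_det] at hU
  have hz : (algebraMap ℂ (Matrix (Fin N) (Fin N) ℂ) z - M).mulVec v = 0 := by
    rw [Matrix.sub_mulVec, hev, Algebra.algebraMap_eq_smul_one, Matrix.smul_mulVec,
      Matrix.one_mulVec, sub_self]
  have hdet : (algebraMap ℂ (Matrix (Fin N) (Fin N) ℂ) z - M).det = 0 :=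
    Matrix.exists_mulVec_eq_zero_iff.mp ⟨v, hv, hz⟩
  rw [hdet] at hU
  exact hU.ne_zero rfl

open Finset in
lemma perron_positive {N : ℕ} (hN : 0 < N) (P : Matrix (Fin N) (Fin N) ℝ)
    (hP : ∀ i j, 0 < P i j) :
    ∃ c : ℝ, 0 < c ∧ ∃ v : Fin N → ℝ, (∀ i, 0 < v i) ∧ P.mulVec v = c • v := by
  haveI : NeZero N := ⟨hN.ne'⟩
  have huniv : (Finset.univ : Finset (Fin N)).Nonempty := univ_nonempty
  set Δ : Set (Fin N → ℝ) := {v | (∀ i, 0 ≤ v i) ∧ ∑ i, v i = 1} with hΔdef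
  have hΔclosed : IsClosed Δ := by
    have h1 : IsClosed {v : Fin N → ℝ | ∀ i, 0 ≤ v i} := by
      have : {v : Fin N → ℝ | ∀ i, 0 ≤ v i} = ⋂ i, {v : Fin N → ℝ | 0 ≤ v i} := by
        ext v; simp
      rw [this]
      exact isClosed_iInter fun i => isClosed_le continuous_const (continuous_apply i)
    have h2 : IsClosed {v : Fin N → ℝ | ∑ i, v i = 1} :=
      isClosed_eq (by continuity) continuous_const
    exact (h1.inter h2)
  have hΔsub : Δ ⊆ Set.pi Set.univ (fun _ : Fin N => Set.Icc (0:ℝ) 1) := by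
    rintro v ⟨hv0, hv1⟩ i _
    refine ⟨hv0 i, ?_⟩
    calc v i ≤ ∑ j, v j := Finset.single_le_sum (fun j _ => hv0 j) (mem_univ i)
    _ = 1 := hv1
  have hΔcompact : IsCompact Δ :=
    (isCompact_univ_pi fun _ => isCompact_Icc).of_isClosed_subset hΔclosed hΔsub
  -- minimal and maximal entries
  obtain ⟨pm, hpm_pos, hpm_le⟩ : ∃ pm : ℝ, 0 < pm ∧ ∀ i j, pm ≤ P i j := by
    refine ⟨(univ ×ˢ univ).inf' (huniv.product huniv) (fun p => P p.1 p.2), ?_, ?_⟩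
    · exact (Finset.lt_inf'_iff _).mpr fun p _ => hP p.1 p.2
    · intro i j
      exact Finset.inf'_le (fun p => P p.1 p.2) (mk_mem_product (mem_univ i) (mem_univ j))
  obtain ⟨pM, hpM_le⟩ : ∃ pM : ℝ, ∀ i j, P i j ≤ pM := by
    refine ⟨(univ ×ˢ univ).sup' (huniv.product huniv) (fun p => P p.1 p.2), fun i j => ?_⟩
    exact Finset.le_sup' (fun p => P p.1 p.2) (mk_mem_product (mem_univ i) (mem_univ j))
  set S : Set ℝ := {t | ∃ v ∈ Δ, ∀ i, t * v i ≤ P.mulVec v i} with hSdef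
  have hu0 : (fun _ : Fin N => (N:ℝ)⁻¹) ∈ Δ := by
    constructor
    · intro i; positivity
    · simp only [Finset.sum_const, Finset.card_univ, Fintype.card_fin, nsmul_eq_mul]
      have : (N:ℝ) ≠ 0 := by positivity
      field_simp
  have hNpos : (0:ℝ) < N := by exact_mod_cast hN
  have hpmS : pm ∈ S := by
    refine ⟨_, hu0, fun i => ?_⟩
    have heval : P.mulVec (fun _ => (N:ℝ)⁻¹) i = (∑ j, P i j) * (N:ℝ)⁻¹ := by
      simp [Matrix.mulVec, dotProduct, Finset.sum_mul]
    rw [heval]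
    have h1 : pm ≤ ∑ j, P i j := by
      have h2 : pm * N ≤ ∑ j, P i j := by
        calc pm * N = ∑ _j : Fin N, pm := by simp [mul_comm]
        _ ≤ ∑ j, P i j := Finset.sum_le_sum fun j _ => hpm_le i j
      nlinarith [hNpos, hpm_pos, (show (1:ℝ) ≤ N by exact_mod_cast hN)]
    exact mul_le_mul_of_nonneg_right h1 (by positivity)
  have hSbdd : BddAbove S := by
    refine ⟨N * pM, fun t ht => ?_⟩
    obtain ⟨v, ⟨hv0, hv1⟩, hineq⟩ := ht
    have hsum : t * 1 ≤ ∑ i, P.mulVec v i := by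
      rw [← hv1, Finset.mul_sum]
      exact Finset.sum_le_sum fun i _ => hineq i
    have hsum2 : ∑ i, P.mulVec v i ≤ N * pM := by
      have : ∀ i, P.mulVec v i ≤ pM := by
        intro i
        calc P.mulVec v i = ∑ j, P i j * v j := rfl
        _ ≤ ∑ j, pM * v j := Finset.sum_le_sum fun j _ => by
              exact mul_le_mul_of_nonneg_right (hpM_le i j) (hv0 j)
        _ = pM * ∑ j, v j := by rw [Finset.mul_sum]
        _ = pM := by rw [hv1, mul_one]
      calc ∑ i, P.mulVec v i ≤ ∑ _i : Fin N, pM := Finset.sum_le_sum fun i _ => this i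
      _ = N * pM := by simp [mul_comm]
    linarith
  set T := sSup S with hTdef
  have hTpm : pm ≤ T := le_csSup hSbdd hpmS
  have hTpos : 0 < T := lt_of_lt_of_le hpm_pos hTpm
  -- approximate witnesses
  have happrox : ∀ k : ℕ, ∃ v ∈ Δ, ∀ i, (T - 1/(k+1)) * v i ≤ P.mulVec v i := by
    intro k
    obtain ⟨t, htS, htlt⟩ := exists_lt_of_lt_csSup ⟨pm, hpmS⟩
      (show T - 1/(k+1) < T by
        have : (0:ℝ) < 1/(k+1) := by positivity
        linarith)
    obtain ⟨v, hvΔ, hvineq⟩ := htS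
    refine ⟨v, hvΔ, fun i => ?_⟩
    calc (T - 1/(k+1)) * v i ≤ t * v i :=
          mul_le_mul_of_nonneg_right htlt.le (hvΔ.1 i)
    _ ≤ P.mulVec v i := hvineq i
  choose vs hvsΔ hvsineq using happrox
  obtain ⟨v, hvΔ, φ, hφmono, hφtend⟩ := hΔcompact.tendsto_subseq hvsΔ
  have hcoord : ∀ j, Filter.Tendsto (fun k => vs (φ k) j) Filter.atTop (nhds (v j)) :=
    fun j => ((continuous_apply j).continuousAt.tendsto).comp hφtend
  have hεtend : Filter.Tendsto (fun k : ℕ => T - 1/((φ k : ℝ)+1)) Filter.atTop (nhds T) := by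
    have h1 : Filter.Tendsto (fun k : ℕ => 1/((k:ℝ)+1)) Filter.atTop (nhds 0) :=
      tendsto_one_div_add_atTop_nhds_zero_nat
    have h2 := h1.comp hφmono.tendsto_atTop
    simpa using Filter.Tendsto.const_sub T h2
  have hkey_ge : ∀ i, T * v i ≤ P.mulVec v i := by
    intro i
    refine le_of_tendsto_of_tendsto'
      (f := fun k => (T - 1/((φ k : ℝ)+1)) * vs (φ k) i)
      (g := fun k => P.mulVec (vs (φ k)) i) (hεtend.mul (hcoord i)) ?_
      (fun k => by exact_mod_cast hvsineq (φ k) i)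
    have : Filter.Tendsto (fun k => ∑ j, P i j * vs (φ k) j) Filter.atTop
        (nhds (∑ j, P i j * v j)) :=
      tendsto_finset_sum _ fun j _ => (hcoord j).const_mul _
    exact this
  -- some coordinate positive, hence mulVec positive
  have hvex : ∃ j, 0 < v j := by
    by_contra hc
    push_neg at hc
    have : ∑ j, v j = 0 := le_antisymm (Finset.sum_nonpos fun j _ => hc j)
      (Finset.sum_nonneg fun j _ => hvΔ.1 j)
    rw [hvΔ.2] at this; norm_num at this
  obtain ⟨j₀, hj₀⟩ := hvex
  have hwpos : ∀ i, 0 < P.mulVec v i := by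
    intro i
    have : P i j₀ * v j₀ ≤ ∑ j, P i j * v j :=
      Finset.single_le_sum (fun j _ => mul_nonneg (hP i j).le (hvΔ.1 j)) (mem_univ j₀)
    have h2 : 0 < P i j₀ * v j₀ := mul_pos (hP i j₀) hj₀
    calc (0:ℝ) < P i j₀ * v j₀ := h2
    _ ≤ ∑ j, P i j * v j := this
  -- equality
  have hkey_le : ∀ i, P.mulVec v i ≤ T * v i := by
    by_contra hc
    push_neg at hc
    obtain ⟨i₀, hi₀⟩ := hc
    set w := P.mulVec v with hwdef
    set d : Fin N → ℝ := fun i => w i - T * v i with hddef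
    have hd0 : ∀ i, 0 ≤ d i := fun i => sub_nonneg.mpr (hkey_ge i)
    have hdi₀ : 0 < d i₀ := sub_pos.mpr hi₀
    have hPd : ∀ i, 0 < P.mulVec d i := by
      intro i
      have h1 : P i i₀ * d i₀ ≤ ∑ j, P i j * d j :=
        Finset.single_le_sum (fun j _ => mul_nonneg (hP i j).le (hd0 j)) (mem_univ i₀)
      calc (0:ℝ) < P i i₀ * d i₀ := mul_pos (hP i i₀) hdi₀
      _ ≤ ∑ j, P i j * d j := h1
    have hPd_eq : ∀ i, P.mulVec d i = P.mulVec w i - T * w i := by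
      have hdv : d = w - T • v := by funext j; simp [hddef, smul_eq_mul]
      intro i
      rw [hdv, Matrix.mulVec_sub, Matrix.mulVec_smul, ← hwdef]
      simp [smul_eq_mul]
    have hPw : ∀ i, T * w i < P.mulVec w i := by
      intro i
      have := hPd i
      rw [hPd_eq i] at this
      linarith
    set δ : ℝ := univ.inf' huniv fun i => (P.mulVec w i - T * w i) / w i with hδdef
    have hδpos : 0 < δ := (Finset.lt_inf'_iff _).mpr fun i _ =>
      div_pos (sub_pos.mpr (hPw i)) (hwpos i)
    have hδle : ∀ i, (T + δ) * w i ≤ P.mulVec w i := by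
      intro i
      have h1 : δ ≤ (P.mulVec w i - T * w i) / w i := Finset.inf'_le _ (mem_univ i)
      have h2 : δ * w i ≤ P.mulVec w i - T * w i := by
        rw [div_eq_mul_inv] at h1
        have := mul_le_mul_of_nonneg_right h1 (hwpos i).le
        rwa [mul_assoc, inv_mul_cancel₀ (hwpos i).ne', mul_one] at this
      nlinarith
    -- normalize w
    set sw := ∑ i, w i with hswdef
    have hswpos : 0 < sw := Finset.sum_pos (fun i _ => hwpos i) huniv
    have hw'Δ : (fun i => sw⁻¹ * w i) ∈ Δ := by
      constructor
      · intro i; exact mul_nonneg (inv_nonneg.mpr hswpos.le) (hwpos i).le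
      · rw [← Finset.mul_sum, inv_mul_cancel₀ hswpos.ne']
    have hTδS : T + δ ∈ S := by
      refine ⟨_, hw'Δ, fun i => ?_⟩
      have hlin : P.mulVec (fun i => sw⁻¹ * w i) i = sw⁻¹ * P.mulVec w i := by
        simp only [Matrix.mulVec, dotProduct, Finset.mul_sum]
        congr 1; funext j; ring
      rw [hlin]
      have := mul_le_mul_of_nonneg_left (hδle i) (inv_nonneg.mpr hswpos.le)
      calc (T + δ) * (sw⁻¹ * w i) = sw⁻¹ * ((T + δ) * w i) := by ring
      _ ≤ sw⁻¹ * P.mulVec w i := this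
    have := le_csSup hSbdd hTδS
    linarith
  have heq : ∀ i, P.mulVec v i = T * v i := fun i => le_antisymm (hkey_le i) (hkey_ge i)
  refine ⟨T, hTpos, v, fun i => ?_, funext fun i => ?_⟩
  · have h1 := hwpos i
    rw [heq i] at h1
    have h2 := hvΔ.1 i
    nlinarith
  · rw [heq i]; rfl
open Finset in
lemma isCompact_simplex {N : ℕ} :
    IsCompact {v : Fin N → ℝ | (∀ i, 0 ≤ v i) ∧ ∑ i, v i = 1} := by
  have hΔclosed : IsClosed {v : Fin N → ℝ | (∀ i, 0 ≤ v i) ∧ ∑ i, v i = 1} := by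
    have h1 : IsClosed {v : Fin N → ℝ | ∀ i, 0 ≤ v i} := by
      have : {v : Fin N → ℝ | ∀ i, 0 ≤ v i} = ⋂ i, {v : Fin N → ℝ | 0 ≤ v i} := by
        ext v; simp
      rw [this]
      exact isClosed_iInter fun i => isClosed_le continuous_const (continuous_apply i)
    have h2 : IsClosed {v : Fin N → ℝ | ∑ i, v i = 1} :=
      isClosed_eq (by continuity) continuous_const
    exact h1.inter h2
  have hΔsub : {v : Fin N → ℝ | (∀ i, 0 ≤ v i) ∧ ∑ i, v i = 1} ⊆
      Set.pi Set.univ (fun _ : Fin N => Set.Icc (0:ℝ) 1) := by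
    rintro v ⟨hv0, hv1⟩ i _
    refine ⟨hv0 i, ?_⟩
    calc v i ≤ ∑ j, v j := Finset.single_le_sum (fun j _ => hv0 j) (mem_univ i)
    _ = 1 := hv1
  exact (isCompact_univ_pi fun _ => isCompact_Icc).of_isClosed_subset hΔclosed hΔsub

open Finset in
lemma mmatrix_xi {N : ℕ} (hN : 0 < N) (M : Matrix (Fin N) (Fin N) ℝ)
    (hM : IsMMatrix M) :
    ∃ ξ : Fin N → ℝ, (∀ i, 0 < ξ i) ∧ ∀ i, 0 < M.mulVec ξ i := by
  haveI : NeZero N := ⟨hN.ne'⟩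
  have huniv : (Finset.univ : Finset (Fin N)).Nonempty := univ_nonempty
  set s : ℝ := 1 + univ.sup' huniv (fun i => M i i) with hsdef
  set B : Matrix (Fin N) (Fin N) ℝ := s • (1 : Matrix (Fin N) (Fin N) ℝ) - M with hBdef
  have hB0 : ∀ i j, 0 ≤ B i j := by
    intro i j
    by_cases hij : i = j
    · subst hij
      have h1 : M i i ≤ univ.sup' huniv (fun i => M i i) := Finset.le_sup' (f := fun j => M j j) (mem_univ i)
      simp only [hBdef, Matrix.sub_apply, Matrix.smul_apply, Matrix.one_apply_eq, smul_eq_mul,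
        mul_one]
      linarith [h1]
    · have h1 : M i j ≤ 0 := hM.1 i j hij
      simp only [hBdef, Matrix.sub_apply, Matrix.smul_apply, Matrix.one_apply_ne hij,
        smul_eq_mul, mul_zero]
      linarith
  have hMB : ∀ (u : Fin N → ℝ) i, M.mulVec u i = s * u i - B.mulVec u i := by
    intro u i
    simp only [hBdef, Matrix.sub_mulVec, Matrix.smul_mulVec, Matrix.one_mulVec,
      Pi.sub_apply, Pi.smul_apply, smul_eq_mul]
    ring
  -- the perturbed eigenpairs, normalized to the simplex
  have hpert : ∀ k : ℕ, ∃ c : ℝ, 0 < c ∧ ∃ u : Fin N → ℝ, (∀ i, 0 < u i) ∧ (∑ i, u i = 1) ∧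
      ∀ i, B.mulVec u i + (1/(k+1 : ℝ)) = c * u i := by
    intro k
    set P : Matrix (Fin N) (Fin N) ℝ := Matrix.of fun i j => B i j + (1/(k+1 : ℝ)) with hPdef
    have hPpos : ∀ i j, 0 < P i j := fun i j => by
      have := hB0 i j; have : (0:ℝ) < 1/(k+1:ℝ) := by positivity
      simp only [hPdef, Matrix.of_apply]
      linarith [hB0 i j]
    obtain ⟨c, hc, v, hv, hev⟩ := perron_positive hN P hPpos
    set sv := ∑ i, v i with hsv
    have hsvpos : 0 < sv := Finset.sum_pos (fun i _ => hv i) huniv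
    refine ⟨c, hc, fun i => sv⁻¹ * v i, fun i => mul_pos (inv_pos.mpr hsvpos) (hv i), ?_, fun i => ?_⟩
    · rw [← Finset.mul_sum, inv_mul_cancel₀ hsvpos.ne']
    · have hPu : P.mulVec (fun j => sv⁻¹ * v j) i = c * (sv⁻¹ * v i) := by
        have h1 : (fun j => sv⁻¹ * v j) = sv⁻¹ • v := by funext j; simp [smul_eq_mul]
        rw [h1, Matrix.mulVec_smul, hev]
        simp [smul_eq_mul]; ring
      have hPB : P.mulVec (fun j => sv⁻¹ * v j) i
          = B.mulVec (fun j => sv⁻¹ * v j) i + (1/(k+1:ℝ)) * ∑ j, sv⁻¹ * v j := by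
        simp only [hPdef, Matrix.mulVec, dotProduct, Matrix.of_apply, Finset.mul_sum]
        rw [← Finset.sum_add_distrib]
        congr 1; funext j; ring
      rw [hPB, show (∑ j, sv⁻¹ * v j) = 1 by rw [← Finset.mul_sum, inv_mul_cancel₀ hsvpos.ne'],
        mul_one] at hPu
      exact hPu
  choose cs hcs us hus husum heig using hpert
  by_cases hcase : ∃ k, cs k ≤ s
  · obtain ⟨k, hk⟩ := hcase
    refine ⟨us k, hus k, fun i => ?_⟩
    rw [hMB]
    have h1 := heig k i
    have h2 : B.mulVec (us k) i = cs k * us k i - 1/(k+1:ℝ) := by linarith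
    rw [h2]
    have h3 : (0:ℝ) < 1/(k+1:ℝ) := by positivity
    have h4 : 0 < us k i := hus k i
    nlinarith [hk, h4]
  · push_neg at hcase
    exfalso
    -- bounded eigenvalues, compactness
    obtain ⟨bM, hbM⟩ : ∃ bM : ℝ, ∀ i j, B i j ≤ bM :=
      ⟨(univ ×ˢ univ).sup' (huniv.product huniv) (fun p => B p.1 p.2), fun i j =>
        Finset.le_sup' (fun p => B p.1 p.2) (mk_mem_product (mem_univ i) (mem_univ j))⟩
    set Cb : ℝ := N * (bM + 1) with hCb
    have hcs_le : ∀ k, cs k ≤ Cb := by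
      intro k
      have h1 : cs k = ∑ i, cs k * us k i := by
        rw [← Finset.mul_sum, husum k, mul_one]
      have h2 : ∀ i, cs k * us k i = B.mulVec (us k) i + 1/(k+1:ℝ) := fun i => (heig k i).symm
      have h3 : ∀ i, B.mulVec (us k) i + 1/(k+1:ℝ) ≤ bM + 1 := by
        intro i
        have hB1 : B.mulVec (us k) i ≤ bM := by
          calc B.mulVec (us k) i = ∑ j, B i j * us k j := rfl
          _ ≤ ∑ j, bM * us k j := Finset.sum_le_sum fun j _ =>
                mul_le_mul_of_nonneg_right (hbM i j) (hus k j).le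
          _ = bM * ∑ j, us k j := by rw [Finset.mul_sum]
          _ = bM := by rw [husum k, mul_one]
        have : (1:ℝ)/(k+1:ℝ) ≤ 1 := by
          rw [div_le_one (by positivity)]; linarith [Nat.cast_nonneg (α := ℝ) k]
        linarith
      calc cs k = ∑ i, cs k * us k i := h1
      _ ≤ ∑ _i : Fin N, (bM + 1) := Finset.sum_le_sum fun i _ => by rw [h2 i]; exact h3 i
      _ = N * (bM + 1) := by simp [Finset.sum_const]; ring
    set K : Set ((Fin N → ℝ) × ℝ) :=
      {v : Fin N → ℝ | (∀ i, 0 ≤ v i) ∧ ∑ i, v i = 1} ×ˢ Set.Icc s Cb with hK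
    have hKcompact : IsCompact K := isCompact_simplex.prod isCompact_Icc
    have hmem : ∀ k, (us k, cs k) ∈ K := fun k =>
      ⟨⟨fun i => (hus k i).le, husum k⟩, (hcase k).le, hcs_le k⟩
    obtain ⟨⟨u, c⟩, hucK, φ, hφmono, hφtend⟩ := hKcompact.tendsto_subseq hmem
    have hutend : Filter.Tendsto (fun k => us (φ k)) Filter.atTop (nhds u) :=
      (continuous_fst.continuousAt.tendsto).comp hφtend
    have hctend : Filter.Tendsto (fun k => cs (φ k)) Filter.atTop (nhds c) :=
      (continuous_snd.continuousAt.tendsto).comp hφtend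
    have hcoord : ∀ j, Filter.Tendsto (fun k => us (φ k) j) Filter.atTop (nhds (u j)) :=
      fun j => ((continuous_apply j).continuousAt.tendsto).comp hutend
    -- limit eigen equation
    have heigu : ∀ i, B.mulVec u i = c * u i := by
      intro i
      have hL : Filter.Tendsto (fun k => B.mulVec (us (φ k)) i + 1/((φ k : ℝ)+1))
          Filter.atTop (nhds (B.mulVec u i + 0)) := by
        refine Filter.Tendsto.add ?_ ?_
        · have hconv : Filter.Tendsto (fun k => ∑ j, B i j * us (φ k) j) Filter.atTop
              (nhds (∑ j, B i j * u j)) :=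
            tendsto_finset_sum _ fun j _ => (hcoord j).const_mul _
          exact hconv
        · have h1 : Filter.Tendsto (fun k : ℕ => 1/((k:ℝ)+1)) Filter.atTop (nhds 0) :=
            tendsto_one_div_add_atTop_nhds_zero_nat
          exact h1.comp hφmono.tendsto_atTop
      have hR : Filter.Tendsto (fun k => cs (φ k) * us (φ k) i)
          Filter.atTop (nhds (c * u i)) := hctend.mul (hcoord i)
      have heq : (fun k => B.mulVec (us (φ k)) i + 1/((φ k : ℝ)+1))
          = fun k => cs (φ k) * us (φ k) i := by
        funext k; exact heig (φ k) i
      rw [heq] at hL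
      rw [add_zero] at hL
      exact tendsto_nhds_unique hL hR
    have hcges : s ≤ c := hucK.2.1
    have husum' : ∑ i, u i = 1 := hucK.1.2
    have hu0 : ∀ i, 0 ≤ u i := hucK.1.1
    have hune : u ≠ 0 := by
      intro hu
      rw [hu] at husum'
      simp at husum'
    -- eigenvalue s - c ≤ 0 of M
    have hMu : ∀ i, M.mulVec u i = (s - c) * u i := by
      intro i
      rw [hMB, heigu i]; ring
    set z : ℂ := ((s - c : ℝ) : ℂ) with hz
    set uc : Fin N → ℂ := fun i => (u i : ℂ) with huc
    have hucne : uc ≠ 0 := by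
      intro hc0
      apply hune
      funext i
      have := congrFun hc0 i
      simp only [huc, Pi.zero_apply, Complex.ofReal_eq_zero] at this
      simp [this]
    have hevc : (M.map (Complex.ofReal)).mulVec uc = z • uc := by
      funext i
      simp only [Matrix.mulVec, dotProduct, Matrix.map_apply, huc, Pi.smul_apply,
        smul_eq_mul, hz]
      have hreal : (∑ j, M i j * u j : ℝ) = (s - c) * u i := hMu i
      rw [← Complex.ofReal_mul, ← hreal, Complex.ofReal_sum]
      push_cast
      ring

    have hspec := (hM.2 z (mem_spectrum_of_eigen _ z uc hucne hevc))
    rw [hz] at hspec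
    simp only [Complex.ofReal_re] at hspec
    linarith

open Finset in
lemma decay_aux {N τ : ℕ} (τd : ℤ → ℕ) (hτd : ∀ m, τd m ≤ τ)
    (E θ : ℤ → Fin N → ℝ) (G : Fin N → Fin N → ℝ)
    (hE : ∀ m i, 0 ≤ E m i) (hθ : ∀ m i, 0 ≤ θ m i) (hG : ∀ i j, 0 ≤ G i j)
    (ξ : Fin N → ℝ) (hξ : ∀ i, 0 < ξ i)
    (lam : ℝ) (hl0 : 0 < lam) (hl1 : lam ≤ 1)
    (hkey : ∀ m i, E m i * (ξ i * lam ^ τ) + θ m i * (∑ j, G i j * ξ j) ≤ ξ i * lam ^ (τ+1))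
    (e : ℤ → Fin N → ℝ) (n : ℤ)
    (hrec : ∀ m, n ≤ m → ∀ i,
      e (m+1) i ≤ E m i * e m i + θ m i * ∑ j, G i j * e (m - τd m) j)
    (K : ℝ) (hK : 0 ≤ K) (hbase : ∀ m, n - τ ≤ m → m ≤ n → ∀ i, e m i ≤ K * ξ i) :
    ∀ m, n - τ ≤ m → ∀ i, e m i ≤ K * ξ i * lam ^ (m - n) := by
  have hlne : lam ≠ 0 := hl0.ne'
  have main : ∀ d : ℕ, ∀ m, n - τ ≤ m → (m - (n - τ)).toNat = d →
      ∀ i, e m i ≤ K * ξ i * lam ^ (m - n) := by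
    intro d
    induction d using Nat.strong_induction_on with
    | _ d ih =>
      intro m hm hd i
      rcases le_or_gt m n with hmn | hmn
      · -- base region
        have h1 : (1:ℝ) ≤ lam ^ (m - n) := one_le_zpow_of_nonpos₀ hl0 hl1 (by omega)
        have h2 := hbase m hm hmn i
        nlinarith [mul_nonneg hK (hξ i).le]
      · -- step
        have hmn' : n ≤ m - 1 := by omega
        have hrecm := hrec (m-1) hmn' i
        rw [show m - 1 + 1 = m by ring] at hrecm
        -- IH at m-1
        have hIH1 : ∀ i', e (m-1) i' ≤ K * ξ i' * lam ^ (m - 1 - n) := by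
          intro i'
          exact ih ((m - 1 - (n - τ)).toNat) (by omega) (m-1) (by omega) rfl i'
        -- IH at the delayed time
        have hIH2 : ∀ j, e (m - 1 - τd (m-1)) j ≤ K * ξ j * lam ^ (m - 1 - τ - n) := by
          intro j
          have hτ1 := hτd (m-1)
          have hle : e (m - 1 - τd (m-1)) j ≤ K * ξ j * lam ^ (m - 1 - τd (m-1) - n) :=
            ih ((m - 1 - τd (m-1) - (n - τ)).toNat) (by omega) _ (by omega) rfl j
          have hmono : lam ^ (m - 1 - τd (m-1) - n) ≤ lam ^ (m - 1 - τ - n) :=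
            zpow_le_zpow_right_of_le_one₀ hl0 hl1 (by omega)
          calc e (m - 1 - τd (m-1)) j ≤ K * ξ j * lam ^ (m - 1 - τd (m-1) - n) := hle
          _ ≤ K * ξ j * lam ^ (m - 1 - τ - n) := by
              apply mul_le_mul_of_nonneg_left hmono
              exact mul_nonneg hK (hξ j).le
        -- combine
        have hstep1 : E (m-1) i * e (m-1) i ≤
            E (m-1) i * (ξ i * lam ^ τ) * (K * lam ^ (m - 1 - τ - n)) := by
          have h2 : E (m-1) i * e (m-1) i ≤ E (m-1) i * (K * ξ i * lam ^ (m-1-n)) :=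
            mul_le_mul_of_nonneg_left (hIH1 i) (hE (m-1) i)
          have h3 : lam ^ (m-1-n) = lam ^ (τ:ℤ) * lam ^ (m - 1 - τ - n) := by
            rw [← zpow_add₀ hlne]
            congr 1
            ring
          rw [h3] at h2
          calc E (m-1) i * e (m-1) i ≤ E (m-1) i * (K * ξ i * (lam ^ (τ:ℤ) * lam ^ (m-1-τ-n))) := h2
          _ = E (m-1) i * (ξ i * lam ^ τ) * (K * lam ^ (m - 1 - τ - n)) := by
              rw [zpow_natCast]
              ring
        have hstep2 : θ (m-1) i * ∑ j, G i j * e (m - 1 - τd (m-1)) j ≤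
            θ (m-1) i * (∑ j, G i j * ξ j) * (K * lam ^ (m - 1 - τ - n)) := by
          have h4 : ∑ j, G i j * e (m - 1 - τd (m-1)) j ≤
              ∑ j, G i j * ξ j * (K * lam ^ (m - 1 - τ - n)) := by
            apply Finset.sum_le_sum
            intro j _
            calc G i j * e (m - 1 - τd (m-1)) j ≤ G i j * (K * ξ j * lam ^ (m-1-τ-n)) :=
                  mul_le_mul_of_nonneg_left (hIH2 j) (hG i j)
            _ = G i j * ξ j * (K * lam ^ (m - 1 - τ - n)) := by ring
          calc θ (m-1) i * ∑ j, G i j * e (m - 1 - τd (m-1)) j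
              ≤ θ (m-1) i * ∑ j, G i j * ξ j * (K * lam ^ (m - 1 - τ - n)) :=
                mul_le_mul_of_nonneg_left h4 (hθ (m-1) i)
          _ = θ (m-1) i * (∑ j, G i j * ξ j) * (K * lam ^ (m - 1 - τ - n)) := by
              rw [← Finset.sum_mul]
              ring
        have hKl : 0 ≤ K * lam ^ (m - 1 - τ - n) :=
          mul_nonneg hK (zpow_nonneg hl0.le _)
        have hfin : e m i ≤ (E (m-1) i * (ξ i * lam ^ τ) + θ (m-1) i * (∑ j, G i j * ξ j)) *
            (K * lam ^ (m - 1 - τ - n)) := by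
          calc e m i ≤ E (m-1) i * e (m-1) i + θ (m-1) i * ∑ j, G i j * e (m-1 - τd (m-1)) j :=
                hrecm
          _ ≤ _ := by
              rw [add_mul]
              exact add_le_add hstep1 hstep2
        calc e m i ≤ (E (m-1) i * (ξ i * lam ^ τ) + θ (m-1) i * (∑ j, G i j * ξ j)) *
            (K * lam ^ (m - 1 - τ - n)) := hfin
        _ ≤ (ξ i * lam ^ (τ+1)) * (K * lam ^ (m - 1 - τ - n)) :=
            mul_le_mul_of_nonneg_right (hkey (m-1) i) hKl
        _ = K * ξ i * lam ^ (m - n) := by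
            have hz : lam ^ (τ+1:ℕ) * lam ^ (m - 1 - (τ:ℤ) - n) = lam ^ (m-n) := by
              rw [← zpow_natCast lam (τ+1), ← zpow_add₀ hlne]
              congr 1
              push_cast
              ring
            rw [← hz]
            ring
  intro m hm i
  exact main _ m hm rfl i

lemma norm_le_segNorm {N : ℕ} (τ : ℕ) (u : ℤ → Fin N → ℝ) (m k : ℤ)
    (h1 : m - τ ≤ k) (h2 : k ≤ m) : ‖u k‖ ≤ segNorm τ u m :=
  Finset.le_sup' (f := fun k => ‖u k‖) (Finset.mem_Icc.mpr ⟨h1, h2⟩)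

lemma segNorm_nonneg {N : ℕ} (τ : ℕ) (u : ℤ → Fin N → ℝ) (m : ℤ) :
    0 ≤ segNorm τ u m :=
  le_trans (norm_nonneg _) (norm_le_segNorm τ u m m (by omega) le_rfl)

lemma segNorm_le {N : ℕ} (τ : ℕ) (u : ℤ → Fin N → ℝ) (m : ℤ) (c : ℝ)
    (hc : ∀ k, m - τ ≤ k → k ≤ m → ‖u k‖ ≤ c) : segNorm τ u m ≤ c :=
  Finset.sup'_le _ _ fun k hk => by
    rw [Finset.mem_Icc] at hk
    exact hc k hk.1 hk.2

lemma segNorm_shift {N : ℕ} (τ : ℕ) (u : ℤ → Fin N → ℝ) (c m : ℤ) :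
    segNorm τ (fun k => u (k + c)) m = segNorm τ u (m + c) := by
  apply le_antisymm
  · apply segNorm_le
    intro k h1 h2
    exact norm_le_segNorm τ u (m + c) (k + c) (by omega) (by omega)
  · apply segNorm_le
    intro k h1 h2
    have hk' : ‖(fun k => u (k + c)) (k - c)‖ ≤ segNorm τ (fun k => u (k + c)) m :=
      norm_le_segNorm τ (fun k => u (k + c)) m (k - c) (by omega) (by omega)
    simpa using hk'

lemma segNorm_congr {N : ℕ} (τ : ℕ) (u v : ℤ → Fin N → ℝ) (m : ℤ)
    (h : ∀ k, u k = v k) : segNorm τ u m = segNorm τ v m := by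
  unfold segNorm
  congr 1
  funext k
  rw [h k]

noncomputable def hsol {N : ℕ} (h : ℝ) (a : ℤ → Fin N → ℝ) (b : ℤ → Fin N → Fin N → ℝ)
    (I : ℤ → Fin N → ℝ) (τd : ℤ → ℕ) (f : Fin N → ℝ → ℝ) (n₀ : ℤ) (α : ℤ → Fin N → ℝ)
    (m : ℤ) : Fin N → ℝ :=
  if hm : m ≤ n₀ then α m
  else fun i =>
    hsol h a b I τd f n₀ α (m-1) i * Real.exp (-(a (m-1) i) * h) +
      ((1 - Real.exp (-(a (m-1) i) * h)) / a (m-1) i) *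
        ((∑ j, b (m-1) i j * f j (hsol h a b I τd f n₀ α (m-1 - τd (m-1)) j)) + I (m-1) i)
  termination_by (m - n₀).toNat
  decreasing_by
  · omega
  · omega

lemma hsol_init {N : ℕ} (h : ℝ) (a : ℤ → Fin N → ℝ) (b : ℤ → Fin N → Fin N → ℝ)
    (I : ℤ → Fin N → ℝ) (τd : ℤ → ℕ) (f : Fin N → ℝ → ℝ) (n₀ : ℤ) (α : ℤ → Fin N → ℝ)
    (m : ℤ) (hm : m ≤ n₀) : hsol h a b I τd f n₀ α m = α m := by
  rw [hsol]
  simp [hm]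

lemma hsol_step {N : ℕ} (h : ℝ) (a : ℤ → Fin N → ℝ) (b : ℤ → Fin N → Fin N → ℝ)
    (I : ℤ → Fin N → ℝ) (τd : ℤ → ℕ) (f : Fin N → ℝ → ℝ) (n₀ : ℤ) (α : ℤ → Fin N → ℝ)
    (m : ℤ) (hm : n₀ ≤ m) (i : Fin N) :
    hsol h a b I τd f n₀ α (m+1) i =
      hsol h a b I τd f n₀ α m i * Real.exp (-(a m i) * h) +
        ((1 - Real.exp (-(a m i) * h)) / a m i) *
          ((∑ j, b m i j * f j (hsol h a b I τd f n₀ α (m - τd m) j)) + I m i) := by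
  rw [hsol]
  have : ¬ (m + 1 ≤ n₀) := by omega
  simp only [this, dite_false]
  norm_num

lemma per_shift {α : Type*} (ω : ℕ) (g : ℤ → α) (hg : ∀ m : ℤ, g (m + ω) = g m) :
    ∀ (m k : ℤ), g (m + k * ω) = g m := by
  intro m k
  induction k using Int.induction_on with
  | zero => simp
  | succ n ihn =>
      calc g (m + ((n:ℤ)+1) * ω) = g ((m + n * ω) + ω) := by
            rw [show m + ((n:ℤ)+1) * ω = (m + n * ω) + ω by ring]
      _ = g (m + n * ω) := hg _
      _ = g m := ihn
  | pred n ihn =>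
      calc g (m + (-(n:ℤ)-1) * ω) = g ((m + (-(n:ℤ)-1) * ω) + ω) := (hg _).symm
      _ = g (m + (-(n:ℤ)) * ω) := by
            rw [show (m + (-(n:ℤ)-1) * ω) + ω = m + (-(n:ℤ)) * ω by ring]
      _ = g m := ihn

lemma per_mod {α : Type*} (ω : ℕ) (hω : 0 < ω) (g : ℤ → α) (hg : ∀ m : ℤ, g (m + ω) = g m)
    (m : ℤ) : g m = g (m % ω) := by
  have h1 : (m % ω) + (m / ω) * ω = m := by
    have := Int.emod_add_mul_ediv m ω
    linarith [mul_comm ((ω:ℤ)) (m / ω)]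
  conv_lhs => rw [← h1]
  exact per_shift ω g hg (m % ω) (m / ω)

set_option maxHeartbeats 3200000 in
/-- If the coefficients of the discretized Hopfield model are ω-periodic and
`M = diag(a_1^-,…,a_N^-) − [b_{ij}^+ F_j]` is an M-matrix, then the model has a unique
ω-periodic solution, which is globally exponentially stable. -/
theorem stmt6 {N τ : ℕ} (ω : ℕ) (hω : 0 < ω) (h : ℝ) (hh : 0 < h)
    (a : ℤ → Fin N → ℝ) (b : ℤ → Fin N → Fin N → ℝ) (I : ℤ → Fin N → ℝ)
    (τd : ℤ → ℕ) (hτd : ∀ m, τd m ≤ τ)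
    (hpera : ∀ m i, a (m + ω) i = a m i)
    (hperb : ∀ m i j, b (m + ω) i j = b m i j)
    (hperI : ∀ m i, I (m + ω) i = I m i)
    (hperτ : ∀ m, τd (m + ω) = τd m)
    (f : Fin N → ℝ → ℝ) (F : Fin N → ℝ) (hF : ∀ j, 0 < F j)
    (hfLip : ∀ j u v, |f j u - f j v| ≤ F j * |u - v|)
    (ha_pos : ∀ m i, 0 < a m i)
    (aminus : Fin N → ℝ) (bplus : Fin N → Fin N → ℝ)
    (ha_inf : ∀ i, IsGLB (Set.range fun m => a m i) (aminus i))
    (hb_sup : ∀ i j, IsLUB (Set.range fun m => |b m i j|) (bplus i j))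
    (hM : IsMMatrix (Matrix.diagonal aminus - Matrix.of fun i j => bplus i j * F j)) :
    ∃ xp : ℤ → Fin N → ℝ,
      -- xp is a solution
      (∀ m : ℤ, ∀ i,
        xp (m + 1) i = xp m i * Real.exp (-(a m i) * h) +
          ((1 - Real.exp (-(a m i) * h)) / a m i) *
            ((∑ j, b m i j * f j (xp (m - τd m) j)) + I m i)) ∧
      -- xp is ω-periodic
      (∀ m : ℤ, ∀ i, xp (m + ω) i = xp m i) ∧
      -- xp is the unique ω-periodic solution
      (∀ xq : ℤ → Fin N → ℝ,
        (∀ m : ℤ, ∀ i,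
          xq (m + 1) i = xq m i * Real.exp (-(a m i) * h) +
            ((1 - Real.exp (-(a m i) * h)) / a m i) *
              ((∑ j, b m i j * f j (xq (m - τd m) j)) + I m i)) →
        (∀ m : ℤ, ∀ i, xq (m + ω) i = xq m i) → xq = xp) ∧
      -- xp is globally exponentially stable
      (∃ μ > (0 : ℝ), ∃ C > (1 : ℝ), ∀ n : ℤ, 0 ≤ n → ∀ y : ℤ → Fin N → ℝ,
        (∀ m, n ≤ m → ∀ i,
          y (m + 1) i = y m i * Real.exp (-(a m i) * h) +
            ((1 - Real.exp (-(a m i) * h)) / a m i) *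
              ((∑ j, b m i j * f j (y (m - τd m) j)) + I m i)) →
        ∀ m, n ≤ m →
          segNorm τ (fun k i => y k i - xp k i) m ≤
            C * Real.exp (-μ * ((m : ℝ) - n)) *
              segNorm τ (fun k i => y k i - xp k i) n) := by
  classical
  rcases Nat.eq_zero_or_pos N with hN0 | hN
  · -- trivial case N = 0
    subst hN0
    have hz : ∀ (u : ℤ → Fin 0 → ℝ) (mm : ℤ), segNorm τ u mm = 0 := by
      intro u mm
      apply le_antisymm
      · apply segNorm_le
        intro k _ _
        rw [show u k = 0 from Subsingleton.elim _ _]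
        simp
      · exact segNorm_nonneg _ _ _
    refine ⟨fun _ _ => 0, fun m i => i.elim0, fun m i => i.elim0,
      fun xq _ _ => funext fun m => funext fun i => i.elim0,
      1, one_pos, 2, one_lt_two, fun n hn y hy m hm => ?_⟩
    rw [hz, hz]
    positivity
  haveI : NeZero N := ⟨hN.ne'⟩
  have huniv : (Finset.univ : Finset (Fin N)).Nonempty := Finset.univ_nonempty
  have hωZ : (0:ℤ) < (ω:ℤ) := by exact_mod_cast hω
  -- periodicity in shifted form
  have haP : ∀ i, ∀ (m k : ℤ), a (m + k * ω) i = a m i := fun i =>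
    per_shift ω (fun m => a m i) (fun m => hpera m i)
  have hbP : ∀ i j, ∀ (m k : ℤ), b (m + k * ω) i j = b m i j := fun i j =>
    per_shift ω (fun m => b m i j) (fun m => hperb m i j)
  have hIP : ∀ i, ∀ (m k : ℤ), I (m + k * ω) i = I m i := fun i =>
    per_shift ω (fun m => I m i) (fun m => hperI m i)
  have hτP : ∀ (m k : ℤ), τd (m + k * ω) = τd m := per_shift ω τd hperτ
  have haM : ∀ (m : ℤ) (i : Fin N), a m i = a (m % ω) i := fun m i =>
    per_mod ω hω (fun m => a m i) (fun m => hpera m i) m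
  -- bounds
  have halb : ∀ m i, aminus i ≤ a m i := fun m i => (ha_inf i).1 ⟨m, rfl⟩
  have hbub : ∀ m i j, |b m i j| ≤ bplus i j := fun m i j => (hb_sup i j).1 ⟨m, rfl⟩
  have hbplus0 : ∀ i j, 0 ≤ bplus i j := fun i j => le_trans (abs_nonneg _) (hbub 0 i j)
  have haminus_pos : ∀ i, 0 < aminus i := by
    intro i
    have hne : ((0:ℤ)) ∈ Finset.Icc (0:ℤ) ((ω:ℤ)-1) := by
      simp [Finset.mem_Icc]; omega
    set c : ℝ := (Finset.Icc (0:ℤ) ((ω:ℤ)-1)).inf' ⟨0, hne⟩ (fun r => a r i) with hc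
    have hcpos : 0 < c := (Finset.lt_inf'_iff _).mpr (fun r _ => ha_pos r i)
    have hlb : ∀ m : ℤ, c ≤ a m i := by
      intro m
      rw [haM m i]
      have h1 := Int.emod_nonneg m (ne_of_gt hωZ)
      have h2 := Int.emod_lt_of_pos m hωZ
      exact Finset.inf'_le _ (by simp [Finset.mem_Icc]; omega)
    have : c ≤ aminus i := (ha_inf i).2 (by rintro x ⟨m, rfl⟩; exact hlb m)
    linarith
  -- positive vector from the M-matrix condition
  obtain ⟨ξ, hξpos, hξM⟩ := mmatrix_xi hN _ hM
  set G : Fin N → Fin N → ℝ := fun i j => bplus i j * F j with hGdef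
  have hGnn : ∀ i j, 0 ≤ G i j := fun i j => mul_nonneg (hbplus0 i j) (hF j).le
  have hSlt : ∀ i, (∑ j, G i j * ξ j) < aminus i * ξ i := by
    intro i
    have h1 := hξM i
    have h2 : (Matrix.diagonal aminus - Matrix.of G).mulVec ξ i
        = aminus i * ξ i - ∑ j, G i j * ξ j := by
      rw [Matrix.sub_mulVec]
      have hd : (Matrix.diagonal aminus).mulVec ξ i = aminus i * ξ i :=
        Matrix.mulVec_diagonal _ _ _
      have ho : (Matrix.of G).mulVec ξ i = ∑ j, G i j * ξ j := rfl
      simp [Pi.sub_apply, hd, ho]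
    rw [h2] at h1; linarith
  have hElt1 : ∀ (m : ℤ) (i : Fin N), Real.exp (-(a m i) * h) < 1 := by
    intro m i
    rw [Real.exp_lt_one_iff]
    have := ha_pos m i
    nlinarith
  have hθpos : ∀ (m : ℤ) (i : Fin N), 0 < (1 - Real.exp (-(a m i) * h)) / a m i :=
    fun m i => div_pos (by linarith [hElt1 m i]) (ha_pos m i)
  -- choice of lam
  obtain ⟨lam, hlam0, hlam1, hkey⟩ :
      ∃ lam : ℝ, 0 < lam ∧ lam < 1 ∧ ∀ (m : ℤ) (i : Fin N),
        Real.exp (-(a m i) * h) * (ξ i * lam ^ τ) +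
          ((1 - Real.exp (-(a m i) * h)) / a m i) * (∑ j, G i j * ξ j) ≤
            ξ i * lam ^ (τ+1) := by
    set P : Finset (ℤ × Fin N) := (Finset.Icc (0:ℤ) ((ω:ℤ)-1)) ×ˢ Finset.univ with hP
    have hpt : ∀ (r : ℤ) (i : Fin N), 0 < ξ i * (1:ℝ) ^ (τ+1) -
        (Real.exp (-(a r i) * h) * (ξ i * (1:ℝ) ^ τ) +
          ((1 - Real.exp (-(a r i) * h)) / a r i) * (∑ j, G i j * ξ j)) := by
      intro r i
      have ha := ha_pos r i
      have hE := hElt1 r i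
      have hS : (∑ j, G i j * ξ j) < a r i * ξ i :=
        lt_of_lt_of_le (hSlt i) (mul_le_mul_of_nonneg_right (halb r i) (hξpos i).le)
      have hkey2 : ξ i * (1:ℝ) ^ (τ+1) -
          (Real.exp (-(a r i) * h) * (ξ i * (1:ℝ) ^ τ) +
            ((1 - Real.exp (-(a r i) * h)) / a r i) * (∑ j, G i j * ξ j)) =
          ((1 - Real.exp (-(a r i) * h)) / a r i) * (a r i * ξ i - ∑ j, G i j * ξ j) := by
        field_simp
        ring
      rw [hkey2]
      exact mul_pos (hθpos r i) (by linarith)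
    have hev : ∀ᶠ lam in nhds (1:ℝ), ∀ p ∈ P, 0 < ξ p.2 * lam ^ (τ+1) -
        (Real.exp (-(a p.1 p.2) * h) * (ξ p.2 * lam ^ τ) +
          ((1 - Real.exp (-(a p.1 p.2) * h)) / a p.1 p.2) * (∑ j, G p.2 j * ξ j)) := by
      rw [Filter.eventually_all_finset]
      intro p hp
      have hc : ContinuousAt (fun lam : ℝ => ξ p.2 * lam ^ (τ+1) -
          (Real.exp (-(a p.1 p.2) * h) * (ξ p.2 * lam ^ τ) +
            ((1 - Real.exp (-(a p.1 p.2) * h)) / a p.1 p.2) * (∑ j, G p.2 j * ξ j))) 1 := by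
        fun_prop
      exact hc.eventually (eventually_gt_nhds (hpt p.1 p.2))
    rw [Metric.eventually_nhds_iff] at hev
    obtain ⟨ε, hε, hball⟩ := hev
    set lam := max (1/2 : ℝ) (1 - ε/2) with hlamdef
    have hl0 : 0 < lam := lt_of_lt_of_le (by norm_num) (le_max_left _ _)
    have hl1 : lam < 1 := max_lt (by norm_num) (by linarith)
    have hdist : dist lam 1 < ε := by
      rw [Real.dist_eq, abs_lt]
      have h1 : 1 - ε/2 ≤ lam := le_max_right _ _
      constructor
      · linarith
      · linarith
    have hP' := hball hdist
    refine ⟨lam, hl0, hl1, ?_⟩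
    intro m i
    have h1 := Int.emod_nonneg m (ne_of_gt hωZ)
    have h2 := Int.emod_lt_of_pos m hωZ
    have hmem : ((m % ω : ℤ), i) ∈ P := by
      rw [hP, Finset.mem_product]
      exact ⟨by simp [Finset.mem_Icc]; omega, Finset.mem_univ i⟩
    have h3 := hP' _ hmem
    simp only at h3
    rw [haM m i]
    linarith

  set μ := -Real.log lam with hμdef
  have hμpos : 0 < μ := by
    have := Real.log_neg hlam0 hlam1
    rw [hμdef]; linarith
  have hexp : ∀ z : ℤ, Real.exp (-μ * (z:ℝ)) = lam ^ z := by
    intro z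
    rw [hμdef, show -(-Real.log lam) * (z:ℝ) = Real.log lam * (z:ℝ) by ring,
      ← Real.rpow_def_of_pos hlam0, Real.rpow_intCast]
  set ξmin := Finset.univ.inf' huniv ξ with hξmindef
  set ξmax := Finset.univ.sup' huniv ξ with hξmaxdef
  have hξminpos : 0 < ξmin := (Finset.lt_inf'_iff _).mpr fun i _ => hξpos i
  have hξminle : ∀ i, ξmin ≤ ξ i := fun i => Finset.inf'_le _ (Finset.mem_univ i)
  have hξmaxge : ∀ i, ξ i ≤ ξmax := fun i => Finset.le_sup' _ (Finset.mem_univ i)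
  have hξmaxpos : 0 < ξmax := lt_of_lt_of_le hξminpos
    (le_trans (hξminle ⟨0, hN⟩) (hξmaxge _))
  set C := ξmax / ξmin * lam ^ (-(τ:ℤ)) + 1 with hCdef
  have hCpos1 : 0 < ξmax / ξmin * lam ^ (-(τ:ℤ)) := by positivity
  have hC1 : 1 < C := by rw [hCdef]; linarith
  -- main stability estimate between any two solutions
  have hstab : ∀ (n : ℤ) (x y : ℤ → Fin N → ℝ),
      (∀ m, n ≤ m → ∀ i, x (m+1) i = x m i * Real.exp (-(a m i) * h) +
        ((1 - Real.exp (-(a m i) * h)) / a m i) *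
          ((∑ j, b m i j * f j (x (m - τd m) j)) + I m i)) →
      (∀ m, n ≤ m → ∀ i, y (m+1) i = y m i * Real.exp (-(a m i) * h) +
        ((1 - Real.exp (-(a m i) * h)) / a m i) *
          ((∑ j, b m i j * f j (y (m - τd m) j)) + I m i)) →
      ∀ m, n ≤ m → segNorm τ (fun k i => y k i - x k i) m ≤
        C * Real.exp (-μ * ((m:ℝ) - (n:ℝ))) * segNorm τ (fun k i => y k i - x k i) n := by
    intro n x y hx hy m hm
    set sN := segNorm τ (fun k i => y k i - x k i) n with hsN
    have hsN0 : 0 ≤ sN := segNorm_nonneg _ _ _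
    set K := sN / ξmin with hKdef
    have hK0 : 0 ≤ K := div_nonneg hsN0 hξminpos.le
    have hrec : ∀ m', n ≤ m' → ∀ i,
        |y (m'+1) i - x (m'+1) i| ≤ Real.exp (-(a m' i) * h) * |y m' i - x m' i| +
          ((1 - Real.exp (-(a m' i) * h)) / a m' i) *
            ∑ j, G i j * |y (m' - τd m') j - x (m' - τd m') j| := by
      intro m' hm' i
      have hdiffeq : y (m'+1) i - x (m'+1) i =
          (y m' i - x m' i) * Real.exp (-(a m' i) * h) +
            ((1 - Real.exp (-(a m' i) * h)) / a m' i) *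
              (∑ j, b m' i j * (f j (y (m' - τd m') j) - f j (x (m' - τd m') j))) := by
        rw [hy m' hm' i, hx m' hm' i]
        rw [show (∑ j, b m' i j * (f j (y (m' - τd m') j) - f j (x (m' - τd m') j))) =
            (∑ j, b m' i j * f j (y (m' - τd m') j)) -
              (∑ j, b m' i j * f j (x (m' - τd m') j)) by
          rw [← Finset.sum_sub_distrib]; congr 1; funext j; ring]
        ring
      rw [hdiffeq]
      have hE1 : (0:ℝ) < Real.exp (-(a m' i) * h) := Real.exp_pos _
      have hθ1 := hθpos m' i
      have hSb : |∑ j, b m' i j * (f j (y (m' - τd m') j) - f j (x (m' - τd m') j))| ≤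
          ∑ j, G i j * |y (m' - τd m') j - x (m' - τd m') j| := by
        calc |∑ j, b m' i j * (f j (y (m' - τd m') j) - f j (x (m' - τd m') j))|
            ≤ ∑ j, |b m' i j * (f j (y (m' - τd m') j) - f j (x (m' - τd m') j))| :=
              Finset.abs_sum_le_sum_abs _ _
        _ ≤ ∑ j, G i j * |y (m' - τd m') j - x (m' - τd m') j| := by
            apply Finset.sum_le_sum
            intro j _
            rw [abs_mul]
            calc |b m' i j| * |f j (y (m' - τd m') j) - f j (x (m' - τd m') j)|
                ≤ bplus i j * (F j * |y (m' - τd m') j - x (m' - τd m') j|) :=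
                  mul_le_mul (hbub m' i j) (hfLip j _ _) (abs_nonneg _) (hbplus0 i j)
            _ = G i j * |y (m' - τd m') j - x (m' - τd m') j| := by
                rw [hGdef]; ring
      calc |(y m' i - x m' i) * Real.exp (-(a m' i) * h) +
          ((1 - Real.exp (-(a m' i) * h)) / a m' i) *
            (∑ j, b m' i j * (f j (y (m' - τd m') j) - f j (x (m' - τd m') j)))|
          ≤ |(y m' i - x m' i) * Real.exp (-(a m' i) * h)| +
            |((1 - Real.exp (-(a m' i) * h)) / a m' i) *
              (∑ j, b m' i j * (f j (y (m' - τd m') j) - f j (x (m' - τd m') j)))| :=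
            abs_add_le _ _
      _ = Real.exp (-(a m' i) * h) * |y m' i - x m' i| +
            ((1 - Real.exp (-(a m' i) * h)) / a m' i) *
              |∑ j, b m' i j * (f j (y (m' - τd m') j) - f j (x (m' - τd m') j))| := by
            rw [abs_mul, abs_mul, abs_of_pos hE1, abs_of_pos hθ1]
            ring
      _ ≤ _ := by
            apply add_le_add le_rfl
            exact mul_le_mul_of_nonneg_left hSb hθ1.le
    have hbase : ∀ m', n - τ ≤ m' → m' ≤ n → ∀ i, |y m' i - x m' i| ≤ K * ξ i := by
      intro m' h1 h2 i
      have ha1 : |y m' i - x m' i| ≤ ‖(fun i => y m' i - x m' i : Fin N → ℝ)‖ := by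
        have := norm_le_pi_norm (fun i => y m' i - x m' i : Fin N → ℝ) i
        simpa [Real.norm_eq_abs] using this
      have ha2 : ‖(fun i => y m' i - x m' i : Fin N → ℝ)‖ ≤ sN :=
        norm_le_segNorm τ (fun k i => y k i - x k i) n m' h1 h2
      have hr : 1 ≤ ξ i / ξmin := (one_le_div hξminpos).mpr (hξminle i)
      have ha3 : sN ≤ K * ξ i := by
        calc sN = sN * 1 := (mul_one _).symm
        _ ≤ sN * (ξ i / ξmin) := mul_le_mul_of_nonneg_left hr hsN0
        _ = K * ξ i := by rw [hKdef]; ring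
      linarith
    have hdecay := decay_aux τd hτd
      (fun m i => Real.exp (-(a m i) * h))
      (fun m i => (1 - Real.exp (-(a m i) * h)) / a m i) G
      (fun m i => (Real.exp_pos _).le) (fun m i => (hθpos m i).le) hGnn ξ hξpos
      lam hlam0 hlam1.le (fun m i => hkey m i)
      (fun m i => |y m i - x m i|) n hrec K hK0 hbase
    have hfinal : segNorm τ (fun k i => y k i - x k i) m ≤
        K * ξmax * lam ^ (m - (τ:ℤ) - n) := by
      apply segNorm_le
      intro k hk1 hk2
      have hnn : (0:ℝ) ≤ K * ξmax * lam ^ (m - (τ:ℤ) - n) := by positivity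
      rw [pi_norm_le_iff_of_nonneg hnn]
      intro i
      rw [Real.norm_eq_abs]
      have hd := hdecay k (by omega) i
      have hmono : lam ^ (k - n) ≤ lam ^ (m - (τ:ℤ) - n) :=
        zpow_le_zpow_right_of_le_one₀ hlam0 hlam1.le (by omega)
      calc |y k i - x k i| ≤ K * ξ i * lam ^ (k - n) := hd
      _ ≤ K * ξmax * lam ^ (k - n) :=
          mul_le_mul_of_nonneg_right
            (mul_le_mul_of_nonneg_left (hξmaxge i) hK0) (zpow_nonneg hlam0.le _)
      _ ≤ K * ξmax * lam ^ (m - (τ:ℤ) - n) :=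
          mul_le_mul_of_nonneg_left hmono (by positivity)
    calc segNorm τ (fun k i => y k i - x k i) m ≤ K * ξmax * lam ^ (m - (τ:ℤ) - n) :=
        hfinal
    _ = (ξmax / ξmin * lam ^ (-(τ:ℤ))) * lam ^ (m - n) * sN := by
        rw [show (m - (τ:ℤ) - n) = (-(τ:ℤ)) + (m - n) by ring, zpow_add₀ hlam0.ne']
        rw [hKdef]
        ring
    _ ≤ C * lam ^ (m - n) * sN := by
        apply mul_le_mul_of_nonneg_right _ hsN0
        apply mul_le_mul_of_nonneg_right _ (zpow_nonneg hlam0.le _)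
        rw [hCdef]; linarith
    _ = C * Real.exp (-μ * ((m:ℝ) - (n:ℝ))) * sN := by
        rw [show ((m:ℝ) - (n:ℝ)) = ((m - n : ℤ) : ℝ) by push_cast; ring, hexp]


  -- base solution starting from zero data at time 0
  set x0 : ℤ → Fin N → ℝ := hsol h a b I τd f 0 (fun _ _ => 0) with hx0def
  have hsolx0 : ∀ m : ℤ, 0 ≤ m → ∀ i, x0 (m+1) i = x0 m i * Real.exp (-(a m i) * h) +
      ((1 - Real.exp (-(a m i) * h)) / a m i) *
        ((∑ j, b m i j * f j (x0 (m - τd m) j)) + I m i) :=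
    fun m hm i => hsol_step h a b I τd f 0 (fun _ _ => 0) m hm i
  have hsolshift : ∀ (x : ℤ → Fin N → ℝ) (n₀ : ℤ) (k : ℤ),
      (∀ m, n₀ ≤ m → ∀ i, x (m+1) i = x m i * Real.exp (-(a m i) * h) +
        ((1 - Real.exp (-(a m i) * h)) / a m i) *
          ((∑ j, b m i j * f j (x (m - τd m) j)) + I m i)) →
      ∀ m, n₀ - k * ω ≤ m → ∀ i,
        x ((m+1) + k * ω) i = x (m + k * ω) i * Real.exp (-(a m i) * h) +
          ((1 - Real.exp (-(a m i) * h)) / a m i) *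
            ((∑ j, b m i j * f j (x ((m - τd m) + k * ω) j)) + I m i) := by
    intro x n₀ k hx m hm i
    have h1 := hx (m + k * ω) (by linarith) i
    rw [show m + k * ω + 1 = (m+1) + k * ω by ring] at h1
    simp only [haP, hbP, hIP, hτP] at h1
    rw [show m + k * ω - (τd m : ℤ) = (m - τd m) + k * ω by ring] at h1
    exact h1
  set D := segNorm τ (fun j i => x0 (j + ω) i - x0 j i) 0 with hDdef
  have hD0 : 0 ≤ D := segNorm_nonneg _ _ _
  have hdk : ∀ (k : ℕ) (m : ℤ), -((k:ℤ) * ω) ≤ m →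
      ‖(fun i => x0 (m + ((k:ℤ)+1) * ω) i - x0 (m + (k:ℤ) * ω) i : Fin N → ℝ)‖ ≤
        C * Real.exp (-μ * ((m:ℝ) + (k:ℝ) * (ω:ℝ))) * D := by
    intro k m hm
    have hsx : ∀ m', -((k:ℤ) * ω) ≤ m' → ∀ i,
        x0 ((m'+1) + (k:ℤ) * ω) i = x0 (m' + (k:ℤ) * ω) i * Real.exp (-(a m' i) * h) +
          ((1 - Real.exp (-(a m' i) * h)) / a m' i) *
            ((∑ j, b m' i j * f j (x0 ((m' - τd m') + (k:ℤ) * ω) j)) + I m' i) :=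
      fun m' hm' i => hsolshift x0 0 (k:ℤ) hsolx0 m' (by linarith) i
    have hsy : ∀ m', -((k:ℤ) * ω) ≤ m' → ∀ i,
        x0 ((m'+1) + ((k:ℤ)+1) * ω) i =
          x0 (m' + ((k:ℤ)+1) * ω) i * Real.exp (-(a m' i) * h) +
          ((1 - Real.exp (-(a m' i) * h)) / a m' i) *
            ((∑ j, b m' i j * f j (x0 ((m' - τd m') + ((k:ℤ)+1) * ω) j)) + I m' i) := by
      intro m' hm' i
      have hle : (0:ℤ) - ((k:ℤ)+1) * ω ≤ m' := by
        have : ((k:ℤ)+1) * ω = (k:ℤ) * ω + ω := by ring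
        linarith
      exact hsolshift x0 0 ((k:ℤ)+1) hsolx0 m' hle i
    have hst := hstab (-((k:ℤ) * ω)) (fun m' => x0 (m' + (k:ℤ) * ω))
      (fun m' => x0 (m' + ((k:ℤ)+1) * ω)) hsx hsy m hm
    have hseg1 : segNorm τ
        (fun j i => x0 (j + ((k:ℤ)+1) * ω) i - x0 (j + (k:ℤ) * ω) i) (-((k:ℤ) * ω)) = D := by
      have h2 := segNorm_shift τ (fun j' i => x0 (j' + ω) i - x0 j' i) ((k:ℤ) * ω)
        (-((k:ℤ) * ω))
      rw [show -((k:ℤ) * ω) + (k:ℤ) * ω = 0 by ring] at h2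
      have h3 : segNorm τ (fun j i => x0 (j + ((k:ℤ)+1) * ω) i - x0 (j + (k:ℤ) * ω) i)
          (-((k:ℤ) * ω)) =
          segNorm τ (fun j => (fun j' i => x0 (j' + ω) i - x0 j' i) (j + (k:ℤ) * ω))
            (-((k:ℤ) * ω)) := by
        apply segNorm_congr
        intro j
        funext i
        simp only
        rw [show j + ((k:ℤ)+1) * ω = j + (k:ℤ) * ω + ω by ring]
      rw [h3, h2, hDdef]
    have hpt : ‖(fun i => x0 (m + ((k:ℤ)+1) * ω) i - x0 (m + (k:ℤ) * ω) i : Fin N → ℝ)‖ ≤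
        segNorm τ (fun j i => x0 (j + ((k:ℤ)+1) * ω) i - x0 (j + (k:ℤ) * ω) i) m := by
      have := norm_le_segNorm τ
        (fun j i => x0 (j + ((k:ℤ)+1) * ω) i - x0 (j + (k:ℤ) * ω) i) m m (by omega) le_rfl
      simpa using this
    rw [hseg1] at hst
    have hcast : ((m:ℝ) - ((-((k:ℤ) * ω) : ℤ):ℝ)) = (m:ℝ) + (k:ℝ) * (ω:ℝ) := by
      push_cast; ring
    rw [hcast] at hst
    exact le_trans hpt hst
  have hbig : ∀ (m K : ℤ), 0 ≤ K → -m ≤ K → -(K * ω) ≤ m := by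
    intro m K hK0 hKm
    have h5 : K ≤ K * ω := by nlinarith [mul_nonneg hK0 (by omega : (0:ℤ) ≤ (ω:ℤ) - 1)]
    linarith
  have hr1 : Real.exp (-μ * (ω:ℝ)) < 1 := by
    rw [Real.exp_lt_one_iff]
    have : (0:ℝ) < (ω:ℝ) := by exact_mod_cast hω
    nlinarith
  have hconv : ∀ m : ℤ, ∃ L : Fin N → ℝ,
      Filter.Tendsto (fun k : ℕ => x0 (m + (k:ℤ) * ω)) Filter.atTop (nhds L) := by
    intro m
    set k₀ : ℕ := m.natAbs with hk₀def
    have hk₀ : ∀ k : ℕ, -((((k + k₀ : ℕ)):ℤ) * ω) ≤ m := by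
      intro k
      apply hbig m _ (by positivity)
      have h1 : (k₀:ℤ) ≤ ((k + k₀ : ℕ):ℤ) := by exact_mod_cast Nat.le_add_left k₀ k
      have h3 : -m ≤ (k₀:ℤ) := by omega
      linarith
    set g : ℕ → (Fin N → ℝ) := fun k => x0 (m + ((k + k₀ : ℕ):ℤ) * ω) with hgdef
    have hgd : ∀ k : ℕ, dist (g k) (g (k+1)) ≤
        (C * D * Real.exp (-μ * ((m:ℝ) + (k₀:ℝ) * (ω:ℝ)))) * (Real.exp (-μ * (ω:ℝ)))^k := by
      intro k
      calc dist (g k) (g (k+1)) = ‖(fun i => x0 (m + (((k + k₀ : ℕ):ℤ)+1) * ω) i -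
          x0 (m + ((k + k₀ : ℕ):ℤ) * ω) i : Fin N → ℝ)‖ := by
            rw [dist_comm, dist_eq_norm]
            congr 1
            funext i
            simp only [hgdef, Pi.sub_apply]
            rw [show (((k+1) + k₀ : ℕ):ℤ) = ((k + k₀ : ℕ):ℤ) + 1 by push_cast; ring]
      _ ≤ C * Real.exp (-μ * ((m:ℝ) + ((k + k₀ : ℕ):ℝ) * (ω:ℝ))) * D :=
          hdk (k + k₀) m (hk₀ k)
      _ = (C * D * Real.exp (-μ * ((m:ℝ) + (k₀:ℝ) * (ω:ℝ)))) * (Real.exp (-μ * (ω:ℝ)))^k := by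
          rw [show (-μ * ((m:ℝ) + ((k + k₀ : ℕ):ℝ) * (ω:ℝ))) =
            (-μ * ((m:ℝ) + (k₀:ℝ) * (ω:ℝ))) + (k:ℝ) * (-μ * (ω:ℝ)) by push_cast; ring]
          rw [Real.exp_add, Real.exp_nat_mul]
          ring
    have hcau : CauchySeq g := cauchySeq_of_le_geometric _ _ hr1 hgd
    obtain ⟨L, hL⟩ := cauchySeq_tendsto_of_complete hcau
    exact ⟨L, (Filter.tendsto_add_atTop_iff_nat k₀).mp hL⟩
  choose xp hxp using hconv
  have hfc : ∀ j, Continuous (f j) := by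
    intro j
    have : LipschitzWith (Real.toNNReal (F j)) (f j) := by
      apply LipschitzWith.of_dist_le_mul
      intro u v
      rw [Real.dist_eq, Real.dist_eq]
      calc |f j u - f j v| ≤ F j * |u - v| := hfLip j u v
      _ ≤ Real.toNNReal (F j) * |u - v| := by
          apply mul_le_mul_of_nonneg_right _ (abs_nonneg _)
          rw [Real.coe_toNNReal _ (hF j).le]
    exact this.continuous
  have hxpsol : ∀ (m : ℤ) (i : Fin N), xp (m+1) i = xp m i * Real.exp (-(a m i) * h) +
      ((1 - Real.exp (-(a m i) * h)) / a m i) *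
        ((∑ j, b m i j * f j (xp (m - τd m) j)) + I m i) := by
    intro m i
    have hcoordA : Filter.Tendsto (fun k : ℕ => x0 ((m+1) + (k:ℤ) * ω) i)
        Filter.atTop (nhds (xp (m+1) i)) := ((continuous_apply i).tendsto _).comp (hxp (m+1))
    have hcoordB : Filter.Tendsto (fun k : ℕ => x0 (m + (k:ℤ) * ω) i)
        Filter.atTop (nhds (xp m i)) := ((continuous_apply i).tendsto _).comp (hxp m)
    have hcoordC : ∀ j, Filter.Tendsto (fun k : ℕ => x0 ((m - τd m) + (k:ℤ) * ω) j)
        Filter.atTop (nhds (xp (m - τd m) j)) :=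
      fun j => ((continuous_apply j).tendsto _).comp (hxp (m - τd m))
    have hRHS : Filter.Tendsto (fun k : ℕ => x0 (m + (k:ℤ) * ω) i * Real.exp (-(a m i) * h) +
        ((1 - Real.exp (-(a m i) * h)) / a m i) *
          ((∑ j, b m i j * f j (x0 ((m - τd m) + (k:ℤ) * ω) j)) + I m i)) Filter.atTop
        (nhds (xp m i * Real.exp (-(a m i) * h) +
          ((1 - Real.exp (-(a m i) * h)) / a m i) *
            ((∑ j, b m i j * f j (xp (m - τd m) j)) + I m i))) := by
      apply Filter.Tendsto.add
      · exact hcoordB.mul_const _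
      · apply Filter.Tendsto.const_mul
        apply Filter.Tendsto.add _ tendsto_const_nhds
        apply tendsto_finset_sum
        intro j _
        exact (((hfc j).tendsto _).comp (hcoordC j)).const_mul _
    have hEv : (fun k : ℕ => x0 ((m+1) + (k:ℤ) * ω) i) =ᶠ[Filter.atTop]
        (fun k : ℕ => x0 (m + (k:ℤ) * ω) i * Real.exp (-(a m i) * h) +
          ((1 - Real.exp (-(a m i) * h)) / a m i) *
            ((∑ j, b m i j * f j (x0 ((m - τd m) + (k:ℤ) * ω) j)) + I m i)) := by
      filter_upwards [Filter.eventually_ge_atTop m.natAbs] with k hk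
      have hm' : -((k:ℤ) * ω) ≤ m := by
        apply hbig m _ (by positivity)
        have h3 : -m ≤ (m.natAbs:ℤ) := by omega
        have h4 : (m.natAbs:ℤ) ≤ (k:ℤ) := by exact_mod_cast hk
        linarith
      exact hsolshift x0 0 (k:ℤ) hsolx0 m (by linarith) i
    exact tendsto_nhds_unique (Filter.Tendsto.congr' hEv hcoordA) hRHS
  have hxper : ∀ m : ℤ, xp (m + ω) = xp m := by
    intro m
    have h1 := hxp (m + ω)
    have h3 : Filter.Tendsto (fun k : ℕ => x0 (m + ((k+1 : ℕ):ℤ) * ω))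
        Filter.atTop (nhds (xp m)) := (Filter.tendsto_add_atTop_iff_nat 1).mpr (hxp m)
    have h4 : (fun k : ℕ => x0 ((m + ω) + (k:ℤ) * ω)) =
        (fun k : ℕ => x0 (m + ((k+1 : ℕ):ℤ) * ω)) := by
      funext k; congr 1; push_cast; ring
    rw [h4] at h1
    exact tendsto_nhds_unique h1 h3
  refine ⟨xp, hxpsol, fun m i => by rw [hxper m], ?_, μ, hμpos, C, hC1, ?_⟩
  · -- uniqueness
    intro xq hxqsol hxqper
    set d : ℤ → Fin N → ℝ := fun k i => xq k i - xp k i with hddef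
    have hdper : ∀ k : ℤ, d (k + ω) = d k := by
      intro k; funext i
      simp only [hddef]
      rw [hxqper k i, hxper k]
    have hsegper : ∀ n' : ℤ, segNorm τ d (n' + ω) = segNorm τ d n' := by
      intro n'
      calc segNorm τ d (n' + ω) = segNorm τ (fun k => d (k + ω)) n' :=
          (segNorm_shift τ d (ω:ℤ) n').symm
      _ = segNorm τ d n' := by
          congr 1
          funext k
          exact hdper k
    have hmodseg : ∀ n' : ℤ, segNorm τ d n' = segNorm τ d (n' % ω) :=
      per_mod ω hω (fun n' => segNorm τ d n') hsegper
    have hne0 : ((0:ℤ)) ∈ Finset.Icc (0:ℤ) ((ω:ℤ)-1) := by simp [Finset.mem_Icc]; omega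
    set S₀ : ℝ := (Finset.Icc (0:ℤ) ((ω:ℤ)-1)).sup' ⟨0, hne0⟩ (fun r => segNorm τ d r)
      with hS₀def
    have hbound : ∀ n' : ℤ, segNorm τ d n' ≤ S₀ := by
      intro n'
      have h1 := Int.emod_nonneg n' (ne_of_gt hωZ)
      have h2 := Int.emod_lt_of_pos n' hωZ
      calc segNorm τ d n' = segNorm τ d (n' % ω) := hmodseg n'
      _ ≤ S₀ := Finset.le_sup' _ (by simp [Finset.mem_Icc]; omega)
    have hzero : ∀ m : ℤ, segNorm τ d m ≤ 0 := by
      intro m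
      have hub : ∀ k : ℕ, segNorm τ d m ≤ (C * S₀) * (Real.exp (-μ))^k := by
        intro k
        have hst := hstab (m - (k:ℤ)) xp xq (fun m' _ i => hxpsol m' i)
          (fun m' _ i => hxqsol m' i) m (by omega)
        have hc1 : ((m:ℝ) - ((m - (k:ℤ) : ℤ):ℝ)) = (k:ℝ) := by push_cast; ring
        rw [hc1] at hst
        rw [← hddef] at hst
        have hS₀nn : 0 ≤ S₀ := le_trans (segNorm_nonneg τ d m) (hbound m)
        calc segNorm τ d m ≤ C * Real.exp (-μ * (k:ℝ)) * segNorm τ d (m - (k:ℤ)) := hst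
        _ ≤ C * Real.exp (-μ * (k:ℝ)) * S₀ :=
            mul_le_mul_of_nonneg_left (hbound _) (by positivity)
        _ = (C * S₀) * (Real.exp (-μ))^k := by
            rw [show -μ * (k:ℝ) = (k:ℝ) * (-μ) by ring, Real.exp_nat_mul]
            ring
      have hlim : Filter.Tendsto (fun k : ℕ => (C * S₀) * (Real.exp (-μ))^k)
          Filter.atTop (nhds 0) := by
        have h1 : Filter.Tendsto (fun k : ℕ => (Real.exp (-μ))^k) Filter.atTop (nhds 0) :=
          tendsto_pow_atTop_nhds_zero_of_lt_one (Real.exp_pos _).le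
            (by rw [Real.exp_lt_one_iff]; linarith)
        have h2 := h1.const_mul (C * S₀)
        simpa using h2
      exact ge_of_tendsto' hlim hub
    funext k i
    have ha1 : |d k i| ≤ ‖d k‖ := by
      simpa [Real.norm_eq_abs] using norm_le_pi_norm (d k) i
    have ha2 : ‖d k‖ ≤ segNorm τ d k := norm_le_segNorm τ d k k (by omega) le_rfl
    have h3 : |d k i| = 0 := le_antisymm (by linarith [hzero k]) (abs_nonneg _)
    have h4 : d k i = 0 := abs_eq_zero.mp h3
    have h5 : xq k i - xp k i = 0 := h4
    linarith
  · -- stability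
    intro n hn y hy m hm
    exact hstab n xp y (fun m' _ i => hxpsol m' i) hy m hm
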